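/- The allocation rule of the Uniform Price Auction is monotone: for every fixed v_{−i}, the allocation x_i(v_i, v_{−i}) is non-decreasing in v_i. Here, with players sorted so v_1 ≥ ... ≥ v_n and k the maximum integer with Σ_{j≤k} B_j ≤ v_k, the allocation is: if Σ_{j≤k} B_j > v_{k+1}, then x_i = B_i / Σ_{j≤k} B_j for i ≤ k and x_i = 0 otherwise; if Σ_{j≤k} B_j ≤ v_{k+1}, then x_i = B_i / v_{k+1} for i ≤ k, x_{k+1} = 1 − Σ_{j≤k} x_j, and x_i = 0 for i > k+1. -/

import Mathlib

open Finset

/-- Permutation sorting the values in non-increasing order. -/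
noncomputable def sortPerm {n : ℕ} (v : Fin n → ℝ) : Equiv.Perm (Fin n) :=
  Tuple.sort (fun i => -v i)

/-- `j`-th highest value (0-indexed), `0` for `j ≥ n`. -/
noncomputable def sortedVal {n : ℕ} (v : Fin n → ℝ) (j : ℕ) : ℝ :=
  if h : j < n then v (sortPerm v ⟨j, h⟩) else 0

/-- Budget of the player with the `j`-th highest value (0-indexed). -/
noncomputable def sortedBud {n : ℕ} (v B : Fin n → ℝ) (j : ℕ) : ℝ :=
  if h : j < n then B (sortPerm v ⟨j, h⟩) else 0

open Classical in
/-- `kstar v B` is the maximum `k` such that the sum of the `k` largest-value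
players' budgets is at most the `k`-th highest value. -/
noncomputable def kstar {n : ℕ} (v B : Fin n → ℝ) : ℕ :=
  Nat.findGreatest
    (fun k => ∑ j ∈ range k, sortedBud v B j ≤ sortedVal v (k-1)) n

/-- Allocation of the Uniform Price Auction to the player of rank `j`
(0-indexed): Case I if `∑_{j≤k} B_j > v_{k+1}`, Case II otherwise. -/
noncomputable def allocSorted {n : ℕ} (v B : Fin n → ℝ) (j : ℕ) : ℝ :=
  let k := kstar v B
  let S := ∑ i ∈ range k, sortedBud v B i
  if sortedVal v k < S then
    (if j < k then sortedBud v B j / S else 0)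
  else if j < k then sortedBud v B j / sortedVal v k
  else if j = k then 1 - S / sortedVal v k
  else 0

/-- Allocation of the Uniform Price Auction to player `i`. -/
noncomputable def UPA {n : ℕ} (v B : Fin n → ℝ) (i : Fin n) : ℝ :=
  allocSorted v B (((sortPerm v).symm i : Fin n) : ℕ)

section lemmas
variable {n : ℕ} (v B : Fin n → ℝ)

lemma sort_antitone : Antitone (v ∘ sortPerm v) := by
  have h := Tuple.monotone_sort (fun i => -v i)
  intro a b hab
  have := h hab
  simp only [Function.comp_apply] at this ⊢
  unfold sortPerm
  linarith

lemma sort_strictAnti (hinj : Function.Injective v) : StrictAnti (v ∘ sortPerm v) := by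
  intro a b hab
  have h1 := sort_antitone v (le_of_lt hab)
  rcases lt_or_eq_of_le h1 with h | h
  · exact h
  · exfalso
    have heq : sortPerm v a = sortPerm v b := hinj h.symm
    exact absurd ((sortPerm v).injective heq) (ne_of_lt hab)

lemma sort_le_iff (hinj : Function.Injective v) (j l : Fin n) :
    v (sortPerm v j) ≤ v l ↔ (sortPerm v).symm l ≤ j := by
  constructor
  · intro h
    by_contra hc
    push_neg at hc
    have := sort_strictAnti v hinj hc
    simp only [Function.comp_apply, Equiv.apply_symm_apply] at this
    linarith
  · intro h
    have := sort_antitone v h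
    simpa using this

lemma sort_lt_iff (hinj : Function.Injective v) (j l : Fin n) :
    v (sortPerm v j) < v l ↔ (sortPerm v).symm l < j := by
  constructor
  · intro h
    by_contra hc
    push_neg at hc
    have := sort_antitone v hc
    simp only [Function.comp_apply, Equiv.apply_symm_apply] at this
    linarith
  · intro h
    have := sort_strictAnti v hinj h
    simpa using this

end lemmas

section klem
variable {n : ℕ} (v B : Fin n → ℝ)

lemma sortedVal_nonneg (hv : ∀ i, 0 < v i) (j : ℕ) : 0 ≤ sortedVal v j := by
  unfold sortedVal; split
  · exact le_of_lt (hv _)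
  · exact le_refl 0

lemma sortedBud_nonneg (hB : ∀ i, 0 < B i) (j : ℕ) : 0 ≤ sortedBud v B j := by
  unfold sortedBud; split
  · exact le_of_lt (hB _)
  · exact le_refl 0

lemma sortedBud_pos (hB : ∀ i, 0 < B i) {j : ℕ} (hj : j < n) : 0 < sortedBud v B j := by
  unfold sortedBud; rw [dif_pos hj]; exact hB _

lemma Sp_mono (hB : ∀ i, 0 < B i) {m m' : ℕ} (h : m ≤ m') :
    ∑ j ∈ range m, sortedBud v B j ≤ ∑ j ∈ range m', sortedBud v B j :=
  Finset.sum_le_sum_of_subset_of_nonneg (range_subset_range.2 h)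
    (fun j _ _ => sortedBud_nonneg v B hB j)

lemma kstar_le : kstar v B ≤ n := Nat.findGreatest_le n

lemma kstar_spec (hv : ∀ i, 0 < v i) :
    ∑ j ∈ range (kstar v B), sortedBud v B j ≤ sortedVal v (kstar v B - 1) := by
  classical
  have h0 : ∑ j ∈ range 0, sortedBud v B j ≤ sortedVal v (0-1) := by
    simpa using sortedVal_nonneg v hv 0
  unfold kstar
  exact Nat.findGreatest_spec (P := fun k =>
    ∑ j ∈ range k, sortedBud v B j ≤ sortedVal v (k-1)) (Nat.zero_le n) h0

lemma kstar_not {m : ℕ} (hm : kstar v B < m) (hmn : m ≤ n) :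
    sortedVal v (m-1) < ∑ j ∈ range m, sortedBud v B j := by
  classical
  by_contra h
  push_neg at h
  have : m ≤ kstar v B := by
    unfold kstar
    exact Nat.le_findGreatest hmn h
  omega

end klem

noncomputable def Cw {n : ℕ} (v B : Fin n → ℝ) (j : Fin n) : ℝ :=
  ∑ l ∈ univ.filter (fun l => v j ≤ v l), B l

noncomputable def Dw {n : ℕ} (v B : Fin n → ℝ) (j : Fin n) : ℝ :=
  ∑ l ∈ univ.filter (fun l => v j < v l), B l

noncomputable def price {n : ℕ} (v B : Fin n → ℝ) : ℝ :=
  if h : (univ : Finset (Fin n)).Nonempty then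
    univ.sup' h (fun j => min (v j) (Cw v B j)) else 0

section pricelem
variable {n : ℕ} (v B : Fin n → ℝ)

lemma map_filter_le (j : Fin n) :
    ((univ.filter (fun m => m ≤ j)).map Fin.valEmbedding) = range ((j : ℕ)+1) := by
  ext m
  simp only [mem_map, mem_filter, mem_univ, true_and, Fin.valEmbedding_apply, mem_range]
  constructor
  · rintro ⟨a, ha, rfl⟩
    exact Nat.lt_succ_of_le ha
  · intro hm
    have hmn : m < n := lt_of_le_of_lt (Nat.lt_succ_iff.mp hm) j.isLt
    exact ⟨⟨m, hmn⟩, Nat.lt_succ_iff.mp hm, rfl⟩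

lemma map_filter_lt (j : Fin n) :
    ((univ.filter (fun m => m < j)).map Fin.valEmbedding) = range (j : ℕ) := by
  ext m
  simp only [mem_map, mem_filter, mem_univ, true_and, Fin.valEmbedding_apply, mem_range]
  constructor
  · rintro ⟨a, ha, rfl⟩
    exact ha
  · intro hm
    have hmn : m < n := lt_trans hm j.isLt
    exact ⟨⟨m, hmn⟩, hm, rfl⟩

lemma sum_filter_le_eq (j : Fin n) :
    ∑ m ∈ range ((j : ℕ)+1), sortedBud v B m
      = ∑ m ∈ univ.filter (fun m => m ≤ j), B (sortPerm v m) := by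
  rw [← map_filter_le j, Finset.sum_map]
  apply Finset.sum_congr rfl
  intro m _
  simp only [Fin.valEmbedding_apply]
  unfold sortedBud
  rw [dif_pos m.isLt]

lemma sum_filter_lt_eq (j : Fin n) :
    ∑ m ∈ range (j : ℕ), sortedBud v B m
      = ∑ m ∈ univ.filter (fun m => m < j), B (sortPerm v m) := by
  rw [← map_filter_lt j, Finset.sum_map]
  apply Finset.sum_congr rfl
  intro m _
  simp only [Fin.valEmbedding_apply]
  unfold sortedBud
  rw [dif_pos m.isLt]

lemma Cw_sorted (hinj : Function.Injective v) (j : Fin n) :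
    Cw v B (sortPerm v j) = ∑ m ∈ range ((j : ℕ)+1), sortedBud v B m := by
  rw [sum_filter_le_eq]
  unfold Cw
  rw [Finset.sum_filter, Finset.sum_filter]
  rw [← Equiv.sum_comp (sortPerm v)
    (g := fun l => if v (sortPerm v j) ≤ v l then B l else 0)]
  apply Finset.sum_congr rfl
  intro m _
  by_cases hc : m ≤ j
  · rw [if_pos hc, if_pos]
    rw [sort_le_iff v hinj]
    simpa using hc
  · rw [if_neg hc, if_neg]
    rw [sort_le_iff v hinj]
    simpa using hc

lemma Dw_sorted (hinj : Function.Injective v) (j : Fin n) :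
    Dw v B (sortPerm v j) = ∑ m ∈ range (j : ℕ), sortedBud v B m := by
  rw [sum_filter_lt_eq]
  unfold Dw
  rw [Finset.sum_filter, Finset.sum_filter]
  rw [← Equiv.sum_comp (sortPerm v)
    (g := fun l => if v (sortPerm v j) < v l then B l else 0)]
  apply Finset.sum_congr rfl
  intro m _
  by_cases hc : m < j
  · rw [if_pos hc, if_pos]
    rw [sort_lt_iff v hinj]
    simpa using hc
  · rw [if_neg hc, if_neg]
    rw [sort_lt_iff v hinj]
    simpa using hc

end pricelem

section priceeq
variable {n : ℕ} (v B : Fin n → ℝ)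

lemma sortedVal_pos (hv : ∀ i, 0 < v i) {j : ℕ} (hj : j < n) : 0 < sortedVal v j := by
  unfold sortedVal; rw [dif_pos hj]; exact hv _

lemma Sp_succ (m : ℕ) : ∑ j ∈ range (m+1), sortedBud v B j
    = (∑ j ∈ range m, sortedBud v B j) + sortedBud v B m := Finset.sum_range_succ _ _

lemma price_eq (hv : ∀ i, 0 < v i) (hB : ∀ i, 0 < B i) (hinj : Function.Injective v)
    (hn : 0 < n) :
    price v B = max (∑ j ∈ range (kstar v B), sortedBud v B j)
      (sortedVal v (kstar v B)) := by
  have hne : (univ : Finset (Fin n)).Nonempty := ⟨⟨0, hn⟩, mem_univ _⟩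
  set k := kstar v B with hk
  set S := ∑ j ∈ range k, sortedBud v B j with hS
  have hkn : k ≤ n := kstar_le v B
  unfold price
  rw [dif_pos hne]
  apply le_antisymm
  · apply Finset.sup'_le
    intro j _
    set m : Fin n := (sortPerm v).symm j with hm
    have hj : j = sortPerm v m := by rw [hm, Equiv.apply_symm_apply]
    rw [hj, Cw_sorted v B hinj m]
    by_cases hc : (m : ℕ) < k
    · refine le_trans (min_le_right _ _) (le_trans ?_ (le_max_left _ _))
      exact Sp_mono v B hB hc
    · push_neg at hc
      refine le_trans (min_le_left _ _) (le_trans ?_ (le_max_right _ _))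
      have hkn' : k < n := lt_of_le_of_lt hc m.isLt
      unfold sortedVal
      rw [dif_pos hkn']
      exact sort_antitone v (show (⟨k, hkn'⟩ : Fin n) ≤ m from hc)
  · by_cases hc : sortedVal v k < S
    · -- Case I : price = S, attained at k-1
      have hk1 : 1 ≤ k := by
        by_contra h
        push_neg at h
        interval_cases k
        · simp only [range_zero, Finset.sum_empty] at hS
          have := sortedVal_pos v hv hn
          rw [hS] at hc
          linarith
      have hk1n : k - 1 < n := by omega
      rw [max_eq_left (le_of_lt hc)]
      have hspec := kstar_spec v B hv
      rw [← hk] at hspec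
      refine le_trans ?_ (Finset.le_sup' _ (mem_univ (sortPerm v ⟨k-1, hk1n⟩)))
      rw [Cw_sorted v B hinj]
      have hcoe : ((⟨k-1, hk1n⟩ : Fin n) : ℕ) + 1 = k := by
        simp only [Fin.val_mk]; omega
      rw [hcoe]
      have hval : sortedVal v (k-1) = v (sortPerm v ⟨k-1, hk1n⟩) := by
        unfold sortedVal; rw [dif_pos hk1n]
      rw [le_min_iff]
      constructor
      · rw [← hval]; exact hspec
      · rw [← hS]
    · -- Case II : price = sortedVal v k, attained at k
      push_neg at hc
      have hkn' : k < n := by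
        rcases lt_or_eq_of_le hkn with h | h
        · exact h
        · exfalso
          have h0 : sortedVal v k = 0 := by
            unfold sortedVal; rw [dif_neg]; omega
          have : 0 < S := by
            rw [hS]
            have : 0 < ∑ j ∈ range 1, sortedBud v B j := by
              simpa using sortedBud_pos v B hB (show 0 < n from hn)
            exact lt_of_lt_of_le this (Sp_mono v B hB (by omega))
          rw [h0] at hc
          linarith
      rw [max_eq_right hc]
      have hnot := kstar_not v B (show k < k + 1 by omega) (by omega)
      simp only [Nat.add_sub_cancel] at hnot
      refine le_trans ?_ (Finset.le_sup' _ (mem_univ (sortPerm v ⟨k, hkn'⟩)))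
      rw [Cw_sorted v B hinj]
      have hcoe : ((⟨k, hkn'⟩ : Fin n) : ℕ) + 1 = k + 1 := by
        simp only [Fin.val_mk]
      rw [hcoe]
      have hval : sortedVal v k = v (sortPerm v ⟨k, hkn'⟩) := by
        unfold sortedVal; rw [dif_pos hkn']
      rw [le_min_iff]
      constructor
      · rw [hval]
      · exact le_of_lt hnot

end priceeq

section closed
variable {n : ℕ} (v B : Fin n → ℝ)

lemma price_pos (hv : ∀ i, 0 < v i) (hB : ∀ i, 0 < B i) (i : Fin n) :
    0 < price v B := by
  have hne : (univ : Finset (Fin n)).Nonempty := ⟨i, mem_univ _⟩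
  unfold price
  rw [dif_pos hne]
  refine lt_of_lt_of_le ?_ (Finset.le_sup' _ (mem_univ i))
  rw [lt_min_iff]
  refine ⟨hv i, ?_⟩
  unfold Cw
  apply Finset.sum_pos
  · intro l _; exact hB l
  · exact ⟨i, by simp⟩

lemma UPA_closed (hv : ∀ i, 0 < v i) (hB : ∀ i, 0 < B i)
    (hinj : Function.Injective v) (i : Fin n) :
    UPA v B i = max 0 (min (B i) (price v B - Dw v B i)) / price v B := by
  have hn : 0 < n := i.pos
  set k := kstar v B with hk
  set S := ∑ j ∈ range k, sortedBud v B j with hS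
  have hkn : k ≤ n := kstar_le v B
  set r : Fin n := (sortPerm v).symm i with hr
  have hir : i = sortPerm v r := by rw [hr, Equiv.apply_symm_apply]
  have hBi : sortedBud v B (r : ℕ) = B i := by
    unfold sortedBud
    rw [dif_pos r.isLt, hir]
  have hDi : Dw v B i = ∑ m ∈ range (r : ℕ), sortedBud v B m := by
    rw [hir, Dw_sorted v B hinj]
  have hprice := price_eq v B hv hB hinj hn
  rw [← hk, ← hS] at hprice
  have hSrBi : ∀ m : ℕ, (r : ℕ) < m →
      (∑ j ∈ range (r : ℕ), sortedBud v B j) + B i ≤ ∑ j ∈ range m, sortedBud v B j := by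
    intro m hm
    rw [← hBi, ← Sp_succ]
    exact Sp_mono v B hB hm
  have halloc : UPA v B i = (if sortedVal v k < S then
      (if (r : ℕ) < k then sortedBud v B (r : ℕ) / S else 0)
    else if (r : ℕ) < k then sortedBud v B (r : ℕ) / sortedVal v k
    else if (r : ℕ) = k then 1 - S / sortedVal v k
    else 0) := rfl
  rw [halloc]
  by_cases hc : sortedVal v k < S
  · -- Case I
    have hpS : price v B = S := by rw [hprice, max_eq_left (le_of_lt hc)]
    have hk1 : 1 ≤ k := by
      by_contra h
      push_neg at h
      interval_cases k
      · simp only [range_zero, Finset.sum_empty] at hS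
        have := sortedVal_pos v hv hn
        rw [hS] at hc; linarith
    have hSpos : 0 < S := by
      rw [hS]
      have : 0 < ∑ j ∈ range 1, sortedBud v B j := by
        simpa using sortedBud_pos v B hB hn
      exact lt_of_lt_of_le this (Sp_mono v B hB hk1)
    rw [if_pos hc]
    by_cases hrk : (r : ℕ) < k
    · rw [if_pos hrk, hpS, hBi, hDi]
      have hmin : min (B i) (S - ∑ m ∈ range (r : ℕ), sortedBud v B m) = B i := by
        rw [min_eq_left]
        have := hSrBi k hrk
        linarith
      rw [hmin, max_eq_right (le_of_lt (hB i))]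
    · push_neg at hrk
      rw [if_neg (not_lt.mpr hrk), hpS, hDi]
      have hle : S - ∑ m ∈ range (r : ℕ), sortedBud v B m ≤ 0 := by
        have := Sp_mono v B hB hrk
        rw [← hS] at this
        linarith
      have : max 0 (min (B i) (S - ∑ m ∈ range (r : ℕ), sortedBud v B m)) = 0 := by
        rw [max_eq_left]
        exact le_trans (min_le_right _ _) hle
      rw [this, zero_div]
  · -- Case II
    push_neg at hc
    have hkn' : k < n := by
      rcases lt_or_eq_of_le hkn with h | h
      · exact h
      · exfalso
        have h0 : sortedVal v k = 0 := by
          unfold sortedVal; rw [dif_neg]; omega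
        have : 0 < S := by
          rw [hS]
          have : 0 < ∑ j ∈ range 1, sortedBud v B j := by
            simpa using sortedBud_pos v B hB hn
          exact lt_of_lt_of_le this (Sp_mono v B hB (by omega))
        rw [h0] at hc
        linarith
    have hwpos : 0 < sortedVal v k := sortedVal_pos v hv hkn'
    have hpw : price v B = sortedVal v k := by rw [hprice, max_eq_right hc]
    have hnot := kstar_not v B (show k < k + 1 by omega) (by omega)
    simp only [Nat.add_sub_cancel] at hnot
    rw [if_neg (not_lt.mpr hc)]
    by_cases hrk : (r : ℕ) < k
    · rw [if_pos hrk, hpw, hBi, hDi]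
      have hmin : min (B i) (sortedVal v k - ∑ m ∈ range (r : ℕ), sortedBud v B m)
          = B i := by
        rw [min_eq_left]
        have h1 := hSrBi k hrk
        rw [← hS] at h1
        linarith
      rw [hmin, max_eq_right (le_of_lt (hB i))]
    · push_neg at hrk
      rcases eq_or_lt_of_le hrk with hrek | hrgt
      · -- r = k : marginal player
        rw [if_neg (not_lt.mpr hrk), if_pos hrek.symm, hpw, hDi]
        have hSr : ∑ m ∈ range (r : ℕ), sortedBud v B m = S := by rw [← hrek, ← hS]
        have hBk : sortedBud v B k = B i := by rw [hrek, hBi]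
        have h2 : ∑ j ∈ range (k+1), sortedBud v B j = S + B i := by
          rw [Sp_succ, hBk, ← hS]
        rw [hSr]
        have hub : sortedVal v k - S ≤ B i := by
          rw [h2] at hnot; linarith
        have hlb : 0 ≤ sortedVal v k - S := by linarith
        rw [min_eq_right hub, max_eq_right hlb, sub_div,
          div_self (ne_of_gt hwpos)]
      · -- r > k : loser
        rw [if_neg (not_lt.mpr hrk), if_neg (by omega), hpw, hDi]
        have hle : sortedVal v k - ∑ m ∈ range (r : ℕ), sortedBud v B m ≤ 0 := by
          have h1 : ∑ j ∈ range (k+1), sortedBud v B j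
              ≤ ∑ m ∈ range (r : ℕ), sortedBud v B m := Sp_mono v B hB hrgt
          linarith
        have : max 0 (min (B i) (sortedVal v k - ∑ m ∈ range (r : ℕ), sortedBud v B m))
            = 0 := by
          rw [max_eq_left]
          exact le_trans (min_le_right _ _) hle
        rw [this, zero_div]

end closed

section update
variable {n : ℕ} (v B : Fin n → ℝ) (i : Fin n) (t : ℝ)

lemma Dw_update_le (hB : ∀ i, 0 < B i) (ht : v i ≤ t) :
    Dw (Function.update v i t) B i ≤ Dw v B i := by
  set v' := Function.update v i t with hv'
  unfold Dw
  apply Finset.sum_le_sum_of_subset_of_nonneg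
  · intro l hl
    simp only [mem_filter, mem_univ, true_and] at hl ⊢
    have hli : l ≠ i := by
      intro h
      rw [h] at hl
      exact lt_irrefl _ hl
    rw [hv', Function.update_self, Function.update_of_ne hli] at hl
    linarith
  · intro l _ _
    exact le_of_lt (hB l)

lemma price_update_ge (hB : ∀ i, 0 < B i) (ht : v i ≤ t) :
    price v B ≤ price (Function.update v i t) B := by
  set v' := Function.update v i t with hv'
  have hne : (univ : Finset (Fin n)).Nonempty := ⟨i, mem_univ _⟩
  unfold price
  rw [dif_pos hne, dif_pos hne]
  obtain ⟨m, _, hm⟩ := Finset.exists_mem_eq_sup' hne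
    (fun j => min (v j) (Cw v B j))
  rw [hm]
  by_cases hmi : m = i
  · rw [hmi]
    set T := univ.filter (fun j => v i ≤ v j) with hT
    have hTne : T.Nonempty := ⟨i, by simp [hT]⟩
    obtain ⟨l, hlT, hlmin⟩ := T.exists_min_image v' hTne
    refine le_trans ?_ (Finset.le_sup' (fun j => min (v' j) (Cw v' B j)) (mem_univ l))
    apply le_min
    · refine le_trans (min_le_left _ _) ?_
      by_cases hli : l = i
      · rw [hli, hv', Function.update_self]; exact ht
      · rw [hv', Function.update_of_ne hli]
        have := (mem_filter.mp hlT).2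
        linarith
    · refine le_trans (min_le_right _ _) ?_
      unfold Cw
      apply Finset.sum_le_sum_of_subset_of_nonneg
      · intro j hj
        simp only [mem_filter, mem_univ, true_and]
        exact hlmin j hj
      · intro j _ _
        exact le_of_lt (hB j)
  · refine le_trans ?_ (Finset.le_sup' (fun j => min (v' j) (Cw v' B j)) (mem_univ m))
    apply le_min
    · rw [hv', Function.update_of_ne hmi]
      exact min_le_left _ _
    · refine le_trans (min_le_right _ _) ?_
      unfold Cw
      apply Finset.sum_le_sum_of_subset_of_nonneg
      · intro j hj
        simp only [mem_filter, mem_univ, true_and] at hj ⊢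
        rw [hv', Function.update_of_ne hmi]
        by_cases hji : j = i
        · rw [hji] at hj
          rw [hji, Function.update_self]
          linarith
        · rw [Function.update_of_ne hji]
          exact hj
      · intro j _ _
        exact le_of_lt (hB j)

lemma price_update_le (hB : ∀ i, 0 < B i) (ht : v i ≤ t)
    (hinj : Function.Injective v) :
    price (Function.update v i t) B ≤ max (price v B) (Dw v B i + B i) := by
  set v' := Function.update v i t with hv'
  have hne : (univ : Finset (Fin n)).Nonempty := ⟨i, mem_univ _⟩
  have hDB : ∀ s : Finset (Fin n), s ⊆ insert i (univ.filter (fun j => v i < v j)) →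
      ∑ j ∈ s, B j ≤ Dw v B i + B i := by
    intro s hs
    have hnotmem : i ∉ univ.filter (fun j => v i < v j) := by
      simp
    calc ∑ j ∈ s, B j ≤ ∑ j ∈ insert i (univ.filter (fun j => v i < v j)), B j :=
          Finset.sum_le_sum_of_subset_of_nonneg hs (fun j _ _ => le_of_lt (hB j))
      _ = B i + Dw v B i := by rw [Finset.sum_insert hnotmem]; rfl
      _ = Dw v B i + B i := by ring
  unfold price
  rw [dif_pos hne, dif_pos hne]
  obtain ⟨l, _, hl⟩ := Finset.exists_mem_eq_sup' hne
    (fun j => min (v' j) (Cw v' B j))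
  rw [hl]
  by_cases hli : l = i
  · rw [hli]
    refine le_trans (min_le_right _ _) (le_trans ?_ (le_max_right _ _))
    unfold Cw
    apply hDB
    intro j hj
    simp only [mem_filter, mem_univ, true_and] at hj
    by_cases hji : j = i
    · rw [hji]; exact mem_insert_self _ _
    · apply mem_insert_of_mem
      simp only [mem_filter, mem_univ, true_and]
      rw [hv', Function.update_self, Function.update_of_ne hji] at hj
      have hij : v i ≤ v j := le_trans ht hj
      rcases lt_or_eq_of_le hij with h | h
      · exact h
      · exact absurd (hinj h.symm) hji
  · by_cases hlv : v i < v l ∧ v l ≤ t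
    · -- i jumped over l
      refine le_trans (min_le_right _ _) (le_trans ?_ (le_max_right _ _))
      unfold Cw
      apply hDB
      intro j hj
      simp only [mem_filter, mem_univ, true_and] at hj
      by_cases hji : j = i
      · rw [hji]; exact mem_insert_self _ _
      · apply mem_insert_of_mem
        simp only [mem_filter, mem_univ, true_and]
        rw [hv', Function.update_of_ne hli, Function.update_of_ne hji] at hj
        exact lt_of_lt_of_le hlv.1 hj
    · -- l's cutoff set is unchanged
      refine le_trans ?_ (le_max_left _ _)
      refine le_trans ?_ (Finset.le_sup' (fun j => min (v j) (Cw v B j)) (mem_univ l))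
      apply le_min
      · rw [hv', Function.update_of_ne hli]
        exact min_le_left _ _
      · refine le_trans (min_le_right _ _) ?_
        unfold Cw
        apply le_of_eq
        apply Finset.sum_congr _ (fun _ _ => rfl)
        apply Finset.filter_congr
        intro j _
        rw [hv', Function.update_of_ne hli]
        by_cases hji : j = i
        · rw [hji, Function.update_self]
          push_neg at hlv
          constructor
          · intro h
            by_contra hc
            push_neg at hc
            exact absurd h (not_le.mpr (hlv hc))
          · intro h
            exact le_trans h ht
        · rw [Function.update_of_ne hji]

end update

lemma key_arith (b D D' p p' : ℝ) (hb : 0 < b) (hD' : 0 ≤ D') (hDD : D' ≤ D)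
    (hp : 0 < p) (hpp : p ≤ p') (hup : p' ≤ max p (D + b)) :
    max 0 (min b (p - D)) / p ≤ max 0 (min b (p' - D')) / p' := by
  have hp' : 0 < p' := lt_of_lt_of_le hp hpp
  have hD : 0 ≤ D := le_trans hD' hDD
  by_cases h1 : p - D ≤ 0
  · have hL : max 0 (min b (p - D)) = 0 :=
      max_eq_left (le_trans (min_le_right _ _) h1)
    rw [hL, zero_div]
    exact div_nonneg (le_max_left _ _) (le_of_lt hp')
  · push_neg at h1
    have h2 : 0 < p' - D' := by linarith
    have hL : max 0 (min b (p - D)) = min b (p - D) :=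
      max_eq_right (le_of_lt (lt_min hb h1))
    have hR : max 0 (min b (p' - D')) = min b (p' - D') :=
      max_eq_right (le_of_lt (lt_min hb h2))
    rw [hL, hR, div_le_div_iff₀ hp hp']
    rcases le_or_gt p' p with hpe | hpl
    · have hpeq : p' = p := le_antisymm hpe hpp
      rw [hpeq]
      apply mul_le_mul_of_nonneg_right _ (le_of_lt hp)
      exact min_le_min (le_refl b) (by linarith)
    · have hpDb : p' ≤ D + b := by
        rcases le_total (D + b) p with h | h
        · rw [max_eq_left h] at hup; linarith
        · rw [max_eq_right h] at hup; exact hup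
      rcases le_total b (p' - D') with hm | hm
      · rw [min_eq_left hm]
        have hLle : min b (p - D) ≤ p - D := min_le_right _ _
        have : (p - D) * p' ≤ b * p := by nlinarith
        nlinarith [min_le_right b (p - D), min_le_left b (p - D)]
      · rw [min_eq_right hm]
        have : (p - D) * p' ≤ (p' - D') * p := by nlinarith
        nlinarith [min_le_right b (p - D)]

lemma Dw_nonneg {n : ℕ} (v B : Fin n → ℝ) (hB : ∀ i, 0 < B i) (i : Fin n) :
    0 ≤ Dw v B i :=
  Finset.sum_nonneg (fun l _ => le_of_lt (hB l))


/-- the allocation rule of the Uniform Price Auction is monotone: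
increasing one's own value (others fixed) never decreases one's allocation. -/
theorem stmt3 {n : ℕ} (v B : Fin n → ℝ)
    (hv : ∀ i, 0 < v i) (hB : ∀ i, 0 < B i)
    (i : Fin n) (t : ℝ) (ht : v i ≤ t)
    (hinj : Function.Injective v)
    (hinj' : Function.Injective (Function.update v i t)) :
    UPA v B i ≤ UPA (Function.update v i t) B i := by
  set v' := Function.update v i t with hv'def
  have hv' : ∀ l, 0 < v' l := by
    intro l
    by_cases hli : l = i
    · rw [hli, hv'def, Function.update_self]
      exact lt_of_lt_of_le (hv i) ht
    · rw [hv'def, Function.update_of_ne hli]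
      exact hv l
  rw [UPA_closed v B hv hB hinj i, UPA_closed v' B hv' hB hinj' i]
  exact key_arith (B i) (Dw v B i) (Dw v' B i) (price v B) (price v' B)
    (hB i) (Dw_nonneg v' B hB i) (Dw_update_le v B i t hB ht)
    (price_pos v B hv hB i) (price_update_ge v B i t hB ht)
    (price_update_le v B i t hB ht hinj)
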